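/- Under the same setup with X X^T nonsingular, X A(ρ) − I_n = −dσ² X (Σ − (ρ/d)X^T X)^{-1} Σ X^T (X X^T)^{-1} (X X^T + dσ² I_n)^{-1}. -/

import Mathlib

open Matrix

theorem stmt4 (n d : ℕ) (hnd : n ≤ d) (hd : 0 < d)
    (X : Matrix (Fin n) (Fin d) ℝ) (hX : IsUnit (X * Xᵀ).det)
    (Sigma : Matrix (Fin d) (Fin d) ℝ) (hSig : Sigma.PosDef)
    (σ ρ : ℝ) (hσ : 0 < σ) (hρ : 0 ≤ ρ)
    (hpd : (Sigma - (ρ / (d : ℝ)) • (Xᵀ * X)).PosDef) :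
    X * (((1 : Matrix (Fin d) (Fin d) ℝ)
          - (ρ * σ ^ 2) • (Sigma - (ρ / (d : ℝ)) • (Xᵀ * X))⁻¹)
        * (Xᵀ * X + ((d : ℝ) * σ ^ 2) • 1)⁻¹ * Xᵀ) - 1
    = -(((d : ℝ) * σ ^ 2) •
        (X * (Sigma - (ρ / (d : ℝ)) • (Xᵀ * X))⁻¹ * Sigma * Xᵀ
          * (X * Xᵀ)⁻¹ * (X * Xᵀ + ((d : ℝ) * σ ^ 2) • 1)⁻¹)) := by
  have hc : (0:ℝ) < (d : ℝ) * σ ^ 2 := by positivity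
  set c : ℝ := (d : ℝ) * σ ^ 2 with hcdef
  set B : Matrix (Fin d) (Fin d) ℝ := Sigma - (ρ / (d : ℝ)) • (Xᵀ * X) with hBdef
  set M : Matrix (Fin d) (Fin d) ℝ := Xᵀ * X + c • 1 with hMdef
  set N : Matrix (Fin n) (Fin n) ℝ := X * Xᵀ + c • 1 with hNdef
  have hBdet : IsUnit B.det := hpd.det_pos.ne'.isUnit
  have hMpd : M.PosDef := by
    rw [hMdef, smul_one_eq_diagonal]
    refine Matrix.PosDef.posSemidef_add ?_ (.diagonal fun _ => hc)
    simpa using Matrix.posSemidef_conjTranspose_mul_self X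
  have hNpd : N.PosDef := by
    rw [hNdef, smul_one_eq_diagonal]
    refine Matrix.PosDef.posSemidef_add ?_ (.diagonal fun _ => hc)
    simpa using Matrix.posSemidef_self_mul_conjTranspose X
  have hMdet : IsUnit M.det := hMpd.det_pos.ne'.isUnit
  have hNdet : IsUnit N.det := hNpd.det_pos.ne'.isUnit
  have key : Xᵀ * N = M * Xᵀ := by
    rw [hMdef, hNdef, Matrix.mul_add, Matrix.add_mul, Matrix.mul_smul, Matrix.smul_mul,
      Matrix.mul_one, Matrix.one_mul, Matrix.mul_assoc]
  have push : M⁻¹ * Xᵀ = Xᵀ * N⁻¹ := by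
    calc M⁻¹ * Xᵀ = M⁻¹ * (Xᵀ * N * N⁻¹) := by
          rw [mul_nonsing_inv_cancel_right _ _ hNdet]
      _ = M⁻¹ * (M * (Xᵀ * N⁻¹)) := by rw [key, Matrix.mul_assoc]
      _ = Xᵀ * N⁻¹ := nonsing_inv_mul_cancel_left _ _ hMdet
  have hSigma : Sigma = B + (ρ / (d : ℝ)) • (Xᵀ * X) := by
    rw [hBdef, sub_add_cancel]
  have hXN : X * (Xᵀ * N⁻¹) = 1 - c • N⁻¹ := by
    have hXXt : X * Xᵀ = N - c • 1 := by rw [hNdef, add_sub_cancel_right]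
    rw [← Matrix.mul_assoc, hXXt, Matrix.sub_mul, mul_nonsing_inv _ hNdet,
      Matrix.smul_mul, Matrix.one_mul]
  have hscal : c * (ρ / (d : ℝ)) = ρ * σ ^ 2 := by
    rw [hcdef]; field_simp
  have keyR : X * B⁻¹ * Sigma * Xᵀ * (X * Xᵀ)⁻¹ * N⁻¹
      = N⁻¹ + (ρ / (d : ℝ)) • (X * (B⁻¹ * (Xᵀ * N⁻¹))) := by
    conv_lhs => rw [hSigma]
    rw [Matrix.mul_add, Matrix.mul_smul, Matrix.add_mul, Matrix.add_mul, Matrix.add_mul,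
      Matrix.smul_mul, Matrix.smul_mul, Matrix.smul_mul]
    congr 1
    · rw [nonsing_inv_mul_cancel_right _ _ hBdet, mul_nonsing_inv _ hX, Matrix.one_mul]
    · congr 1
      rw [← Matrix.mul_assoc (X * B⁻¹) Xᵀ X, Matrix.mul_assoc (X * B⁻¹ * Xᵀ) X Xᵀ,
        mul_nonsing_inv_cancel_right _ _ hX, Matrix.mul_assoc, Matrix.mul_assoc]
  calc X * ((1 - (ρ * σ ^ 2) • B⁻¹) * M⁻¹ * Xᵀ) - 1
      = X * (M⁻¹ * Xᵀ) - (ρ * σ ^ 2) • (X * (B⁻¹ * (M⁻¹ * Xᵀ))) - 1 := by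
        rw [Matrix.sub_mul, Matrix.sub_mul, Matrix.one_mul, Matrix.smul_mul, Matrix.smul_mul,
          Matrix.mul_sub, Matrix.mul_smul, Matrix.mul_assoc B⁻¹ M⁻¹ Xᵀ]
    _ = (1 - c • N⁻¹) - (ρ * σ ^ 2) • (X * (B⁻¹ * (Xᵀ * N⁻¹))) - 1 := by
        rw [push, hXN]
    _ = -(c • N⁻¹) - (ρ * σ ^ 2) • (X * (B⁻¹ * (Xᵀ * N⁻¹))) := by abel
    _ = -(c • (X * B⁻¹ * Sigma * Xᵀ * (X * Xᵀ)⁻¹ * N⁻¹)) := by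
        rw [keyR, smul_add, smul_smul, hscal, neg_add, sub_eq_add_neg]
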